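/- Realize the free vector lattice $FVL(A)$ as the vector sublattice of $\mathbb{R}^{\mathbb{R}^A}$ generated by the evaluation maps $\delta_a(\xi) = \xi(a)$. Then the real-valued vector lattice homomorphisms on $FVL(A)$ are precisely the evaluations at points of $\mathbb{R}^A$: $\omega$ is a lattice homomorphism $FVL(A) \to \mathbb{R}$ if and only if there exists $\xi \in \mathbb{R}^A$ with $\omega(f) = f(\xi)$ for all $f \in FVL(A)$. -/
import Mathlib


def IsVectorSublattice {E : Type*} [AddCommGroup E] [Lattice E] [Module ℝ E]
    (S : Set E) : Prop :=
  (0 : E) ∈ S ∧ (∀ x ∈ S, ∀ y ∈ S, x + y ∈ S) ∧ (∀ (c : ℝ), ∀ x ∈ S, c • x ∈ S) ∧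
    (∀ x ∈ S, ∀ y ∈ S, x ⊔ y ∈ S) ∧ (∀ x ∈ S, ∀ y ∈ S, x ⊓ y ∈ S)

def latticeGen {E : Type*} [AddCommGroup E] [Lattice E] [Module ℝ E]
    (D : Set E) : Set E :=
  ⋂₀ {S : Set E | IsVectorSublattice S ∧ D ⊆ S}

lemma latticeGen_isSublattice {E : Type*} [AddCommGroup E] [Lattice E] [Module ℝ E]
    (D : Set E) : IsVectorSublattice (latticeGen D) := by
  refine ⟨?_, ?_, ?_, ?_, ?_⟩
  · intro S hS; exact hS.1.1
  · intro x hx y hy S hS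
    exact hS.1.2.1 x (hx S hS) y (hy S hS)
  · intro c x hx S hS
    exact hS.1.2.2.1 c x (hx S hS)
  · intro x hx y hy S hS
    exact hS.1.2.2.2.1 x (hx S hS) y (hy S hS)
  · intro x hx y hy S hS
    exact hS.1.2.2.2.2 x (hx S hS) y (hy S hS)

lemma subset_latticeGen {E : Type*} [AddCommGroup E] [Lattice E] [Module ℝ E]
    (D : Set E) : D ⊆ latticeGen D := by
  intro x hx S hS; exact hS.2 hx

/-- realizing `FVL(A)` as the sublattice `L` of `ℝ^(ℝ^A)` generated by
the evaluations `δ_a : ξ ↦ ξ a`, a functional `ω` on `L` is a (linear) lattice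
homomorphism iff it is evaluation at some point `ξ ∈ ℝ^A`. -/
theorem stmt_8 {A : Type*} [Nonempty A]
    (L : Set ((A → ℝ) → ℝ))
    (hL : L = latticeGen (Set.range (fun (a : A) => fun ξ : A → ℝ => ξ a)))
    (ω : ((A → ℝ) → ℝ) → ℝ) :
    ((∀ f ∈ L, ∀ g ∈ L, ω (f + g) = ω f + ω g) ∧
     (∀ (c : ℝ), ∀ f ∈ L, ω (c • f) = c * ω f) ∧
     (∀ f ∈ L, ∀ g ∈ L, ω (f ⊔ g) = ω f ⊔ ω g)) ↔
      ∃ ξ : A → ℝ, ∀ f ∈ L, ω f = f ξ := by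
  subst hL
  set D : Set ((A → ℝ) → ℝ) := Set.range (fun (a : A) => fun ξ : A → ℝ => ξ a) with hD
  have hSub := latticeGen_isSublattice D
  obtain ⟨h0, hadd', hsmul', hsupc, hinfc⟩ := hSub
  constructor
  · rintro ⟨hadd, hsmul, hsup⟩
    -- ω 0 = 0
    have hω0 : ω 0 = 0 := by
      have := hadd 0 h0 0 h0
      simp at this; linarith
    have hneg : ∀ f ∈ latticeGen D, ω (-f) = -ω f := by
      intro f hf
      have := hsmul (-1) f hf
      simpa using this
    -- inf preservation
    have hinf : ∀ f ∈ latticeGen D, ∀ g ∈ latticeGen D, ω (f ⊓ g) = ω f ⊓ ω g := by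
      intro f hf g hg
      have h1 : ω (f ⊓ g + f ⊔ g) = ω (f ⊓ g) + ω (f ⊔ g) :=
        hadd _ (hinfc f hf g hg) _ (hsupc f hf g hg)
      rw [inf_add_sup] at h1
      have h2 : ω (f + g) = ω f + ω g := hadd f hf g hg
      have h3 : ω (f ⊔ g) = ω f ⊔ ω g := hsup f hf g hg
      have h4 : ω f ⊓ ω g + ω f ⊔ ω g = ω f + ω g := inf_add_sup _ _
      have : ω (f ⊓ g) = ω f + ω g - (ω f ⊔ ω g) := by linarith
      linarith
    set ξ : A → ℝ := fun a => ω (fun η : A → ℝ => η a) with hξ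
    refine ⟨ξ, ?_⟩
    set S : Set ((A → ℝ) → ℝ) := {f | f ∈ latticeGen D ∧ ω f = f ξ} with hS
    have hSprop : IsVectorSublattice S ∧ D ⊆ S := by
      constructor
      · refine ⟨⟨h0, by simpa using hω0⟩, ?_, ?_, ?_, ?_⟩
        · rintro x ⟨hx, hx'⟩ y ⟨hy, hy'⟩
          exact ⟨hadd' x hx y hy, by rw [hadd x hx y hy, hx', hy']; simp⟩
        · rintro c x ⟨hx, hx'⟩
          exact ⟨hsmul' c x hx, by rw [hsmul c x hx, hx']; simp⟩
        · rintro x ⟨hx, hx'⟩ y ⟨hy, hy'⟩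
          exact ⟨hsupc x hx y hy, by rw [hsup x hx y hy, hx', hy']; simp [Pi.sup_apply]⟩
        · rintro x ⟨hx, hx'⟩ y ⟨hy, hy'⟩
          exact ⟨hinfc x hx y hy, by rw [hinf x hx y hy, hx', hy']; simp [Pi.inf_apply]⟩
      · rintro x ⟨a, rfl⟩
        exact ⟨subset_latticeGen D ⟨a, rfl⟩, rfl⟩
    intro f hf
    exact (hf S hSprop).2
  · rintro ⟨ξ, hξ⟩
    refine ⟨?_, ?_, ?_⟩
    · intro f hf g hg
      rw [hξ f hf, hξ g hg, hξ (f + g) (hadd' f hf g hg)]; simp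
    · intro c f hf
      rw [hξ f hf, hξ (c • f) (hsmul' c f hf)]; simp
    · intro f hf g hg
      rw [hξ f hf, hξ g hg, hξ (f ⊔ g) (hsupc f hf g hg)]; simp [Pi.sup_apply]
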